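/- Let 0 < α₂ < α₁ < 1, C₁ ≥ 0, C₂ ≥ 0 with C₁ + C₂ = 1, and λ > 0. Let (r_i)_{i≥1} be a probability mass function on the positive integers and let r_n(k) denote its k-fold convolution, i.e. r_n(1) = r_n, r_n(k) = Σ_{i=1}^{n} r_i r_{n−i}(k−1), with r_0(0) = 1, r_n(0) = 0 for n ≥ 1 and r_0(k) = 0 for k ≥ 1. Let p_n : [0,∞) → ℝ, n ≥ 0, be differentiable functions whose Caputo fractional derivatives of orders α₁ and α₂ exist (the defining integrals converge), and which satisfy C₁ ∂^{α₁}_t p_n(t) + C₂ ∂^{α₂}_t p_n(t) = −λ(p_n(t) − p_{n−1}(t)) for all n ≥ 0 and t > 0, with the convention p_{−1} ≡ 0. Define q_0 = p_0 and q_n(t) = Σ_{k=1}^{n} r_n(k) p_k(t) for n ≥ 1. Then C₁ ∂^{α₁}_t q_0(t) + C₂ ∂^{α₂}_t q_0(t) = −λ q_0(t), and for every n ≥ 1, C₁ ∂^{α₁}_t q_n(t) + C₂ ∂^{α₂}_t q_n(t) = −λ q_n(t) + λ Σ_{i=1}^{n} r_i q_{n−i}(t). -/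

import Mathlib

open MeasureTheory Filter Real

noncomputable section

/-- The Caputo fractional derivative of order `α ∈ (0,1)`:
`∂^α_t f(t) = (1/Γ(1−α)) ∫₀ᵗ (t−r)^{−α} f′(r) dr`. -/
noncomputable def caputo (α : ℝ) (f : ℝ → ℝ) (t : ℝ) : ℝ :=
  (1 / Real.Gamma (1 - α)) * ∫ r in (0:ℝ)..t, (t - r) ^ (-α) * deriv f r

/-- `rconv r n k` is the `k`-fold convolution `r_n(k)` of the probability mass function
`(r_i)_{i ≥ 1}`: `r_0(0) = 1`, `r_n(0) = 0` for `n ≥ 1`, and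
`r_n(k+1) = Σ_{i=1}^{n} r_i r_{n−i}(k)`. -/
noncomputable def rconv (r : ℕ → ℝ) : ℕ → ℕ → ℝ
  | n, 0 => if n = 0 then 1 else 0
  | n, (k + 1) => ∑ i ∈ Finset.Icc 1 n, r i * rconv r (n - i) k

lemma rconv_zero_eq (r : ℕ → ℝ) (n : ℕ) : rconv r n 0 = if n = 0 then 1 else 0 := by
  rfl

lemma rconv_succ_eq (r : ℕ → ℝ) (n k : ℕ) :
    rconv r n (k + 1) = ∑ i ∈ Finset.Icc 1 n, r i * rconv r (n - i) k := by
  rfl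

lemma rconv_eq_zero (r : ℕ → ℝ) {n k : ℕ} (h : n < k) : rconv r n k = 0 := by
  induction k generalizing n with
  | zero => omega
  | succ k ih =>
    rw [rconv_succ_eq]
    apply Finset.sum_eq_zero
    intro i hi
    rw [Finset.mem_Icc] at hi
    rw [ih (by omega)]
    ring

lemma caputo_sum (α : ℝ) (S : Finset ℕ) (c : ℕ → ℝ) (p : ℕ → ℝ → ℝ)
    (hdiff : ∀ j, Differentiable ℝ (p j)) (t : ℝ)
    (hint : ∀ j ∈ S, IntervalIntegrable (fun s => (t - s) ^ (-α) * deriv (p j) s) volume 0 t) :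
    caputo α (fun u => ∑ j ∈ S, c j * p j u) t = ∑ j ∈ S, c j * caputo α (p j) t := by
  have hderiv : ∀ s : ℝ, deriv (fun u => ∑ j ∈ S, c j * p j u) s
      = ∑ j ∈ S, c j * deriv (p j) s := by
    intro s
    exact (HasDerivAt.fun_sum (fun j _ => ((hdiff j s).hasDerivAt.const_mul (c j)))).deriv
  unfold caputo
  calc (1 / Real.Gamma (1 - α)) *
      ∫ s in (0:ℝ)..t, (t - s) ^ (-α) * deriv (fun u => ∑ j ∈ S, c j * p j u) s
      = (1 / Real.Gamma (1 - α)) *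
        ∫ s in (0:ℝ)..t, ∑ j ∈ S, c j * ((t - s) ^ (-α) * deriv (p j) s) := by
        congr 1
        apply intervalIntegral.integral_congr
        intro s _
        show (t - s) ^ (-α) * deriv (fun u => ∑ j ∈ S, c j * p j u) s
          = ∑ j ∈ S, c j * ((t - s) ^ (-α) * deriv (p j) s)
        rw [hderiv, Finset.mul_sum]
        exact Finset.sum_congr rfl fun j _ => by ring
    _ = (1 / Real.Gamma (1 - α)) *
        ∑ j ∈ S, c j * ∫ s in (0:ℝ)..t, (t - s) ^ (-α) * deriv (p j) s := by
        rw [intervalIntegral.integral_finset_sum]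
        · simp_rw [intervalIntegral.integral_const_mul]
        · exact fun j hj => (hint j hj).const_mul (c j)
    _ = ∑ j ∈ S, c j * ((1 / Real.Gamma (1 - α)) *
          ∫ s in (0:ℝ)..t, (t - s) ^ (-α) * deriv (p j) s) := by
        rw [Finset.mul_sum]
        apply Finset.sum_congr rfl
        intro j _
        ring

/-- The governing fractional differential equations of the state
probabilities of the compound MFPP, derived from those of the MFPP. -/
theorem compound_mfpp_governing_equations
    (α₁ α₂ C₁ C₂ lam : ℝ)
    (hα₂ : 0 < α₂) (hα₂₁ : α₂ < α₁) (hα₁ : α₁ < 1)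
    (hC₁ : 0 ≤ C₁) (hC₂ : 0 ≤ C₂) (hC : C₁ + C₂ = 1) (hlam : 0 < lam)
    -- `(r_i)_{i ≥ 1}` is a probability mass function on the positive integers
    (r : ℕ → ℝ) (hr0 : r 0 = 0) (hrnn : ∀ i, 0 ≤ r i) (hrsum : ∑' i, r i = 1)
    -- the state probabilities `p_n` of the MFPP, assumed differentiable with
    -- convergent Caputo integrals of orders `α₁` and `α₂`
    (p : ℕ → ℝ → ℝ)
    (hdiff : ∀ n, Differentiable ℝ (p n))
    (hint₁ : ∀ n, ∀ t : ℝ, 0 < t →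
      IntervalIntegrable (fun s => (t - s) ^ (-α₁) * deriv (p n) s) volume 0 t)
    (hint₂ : ∀ n, ∀ t : ℝ, 0 < t →
      IntervalIntegrable (fun s => (t - s) ^ (-α₂) * deriv (p n) s) volume 0 t)
    -- the governing equations of the `p_n`, with the convention `p_{−1} ≡ 0`
    (hp0 : ∀ t : ℝ, 0 < t →
      C₁ * caputo α₁ (p 0) t + C₂ * caputo α₂ (p 0) t = -lam * (p 0 t - 0))
    (hpn : ∀ n : ℕ, 1 ≤ n → ∀ t : ℝ, 0 < t →
      C₁ * caputo α₁ (p n) t + C₂ * caputo α₂ (p n) t = -lam * (p n t - p (n - 1) t))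
    -- the state probabilities of the compound process
    (q : ℕ → ℝ → ℝ)
    (hq0 : q 0 = p 0)
    (hqn : ∀ n : ℕ, 1 ≤ n → ∀ t : ℝ,
      q n t = ∑ k ∈ Finset.Icc 1 n, rconv r n k * p k t) :
    (∀ t : ℝ, 0 < t →
      C₁ * caputo α₁ (q 0) t + C₂ * caputo α₂ (q 0) t = -lam * q 0 t) ∧
    (∀ n : ℕ, 1 ≤ n → ∀ t : ℝ, 0 < t →
      C₁ * caputo α₁ (q n) t + C₂ * caputo α₂ (q n) t =
        -lam * q n t + lam * ∑ i ∈ Finset.Icc 1 n, r i * q (n - i) t) := by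
  -- uniform description of `q m` as a sum over `range (m+1)`
  have hQ : ∀ m : ℕ, ∀ u : ℝ, q m u = ∑ j ∈ Finset.range (m + 1), rconv r m j * p j u := by
    intro m u
    rcases Nat.eq_zero_or_pos m with hm | hm
    · subst hm
      simp [hq0, rconv_zero_eq]
    · rw [hqn m hm]
      apply Finset.sum_subset
      · intro x hx
        rw [Finset.mem_Icc] at hx
        rw [Finset.mem_range]
        omega
      · intro x hx hx'
        rw [Finset.mem_range] at hx
        rw [Finset.mem_Icc] at hx'
        have hx0 : x = 0 := by omega
        subst hx0
        rw [rconv_zero_eq, if_neg (by omega)]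
        ring
  have hQfun : ∀ m : ℕ, q m = fun u => ∑ j ∈ Finset.range (m + 1), rconv r m j * p j u := by
    intro m; funext u; exact hQ m u
  constructor
  · intro t ht
    rw [hq0, hp0 t ht]
    ring
  · intro n hn t ht
    set c : ℕ → ℝ := rconv r n with hc
    have hc0 : c 0 = 0 := by
      rw [hc, rconv_zero_eq, if_neg (by omega)]
    -- compute the left-hand side via linearity of the Caputo derivative
    have hcap : ∀ α : ℝ,
        (∀ j, IntervalIntegrable (fun s => (t - s) ^ (-α) * deriv (p j) s) volume 0 t) →
        caputo α (q n) t = ∑ j ∈ Finset.range (n + 1), c j * caputo α (p j) t := by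
      intro α hα
      rw [hQfun n]
      exact caputo_sum α _ c p hdiff t (fun j _ => hα j)
    rw [hcap α₁ (fun j => hint₁ j t ht), hcap α₂ (fun j => hint₂ j t ht)]
    have lhs_eq : C₁ * (∑ j ∈ Finset.range (n + 1), c j * caputo α₁ (p j) t)
        + C₂ * (∑ j ∈ Finset.range (n + 1), c j * caputo α₂ (p j) t)
        = ∑ j ∈ Finset.range (n + 1),
            c j * (C₁ * caputo α₁ (p j) t + C₂ * caputo α₂ (p j) t) := by
      rw [Finset.mul_sum, Finset.mul_sum, ← Finset.sum_add_distrib]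
      apply Finset.sum_congr rfl
      intro j _
      ring
    rw [lhs_eq]
    have step : ∑ j ∈ Finset.range (n + 1),
        c j * (C₁ * caputo α₁ (p j) t + C₂ * caputo α₂ (p j) t)
        = ∑ j ∈ Finset.range (n + 1), c j * (-lam * (p j t - p (j - 1) t)) := by
      apply Finset.sum_congr rfl
      intro j _
      rcases Nat.eq_zero_or_pos j with hj | hj
      · subst hj; rw [hc0]; ring
      · rw [hpn j hj t ht]
    rw [step]
    -- the convolution identity
    have conv : ∑ i ∈ Finset.Icc 1 n, r i * q (n - i) t
        = ∑ j ∈ Finset.range (n + 1), c (j + 1) * p j t := by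
      have h1 : ∀ i ∈ Finset.Icc 1 n,
          r i * q (n - i) t = ∑ j ∈ Finset.range (n + 1), r i * (rconv r (n - i) j * p j t) := by
        intro i hi
        rw [hQ (n - i) t, Finset.mul_sum]
        apply Finset.sum_subset
        · intro x hx
          rw [Finset.mem_range] at hx ⊢
          rw [Finset.mem_Icc] at hi
          omega
        · intro x hx hx'
          rw [Finset.mem_range] at hx hx'
          rw [rconv_eq_zero r (by omega)]
          ring
      rw [Finset.sum_congr rfl h1, Finset.sum_comm]
      apply Finset.sum_congr rfl
      intro j _
      have : c (j + 1) = ∑ i ∈ Finset.Icc 1 n, r i * rconv r (n - i) j := rconv_succ_eq r n j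
      rw [this, Finset.sum_mul]
      apply Finset.sum_congr rfl
      intro i _
      ring
    rw [conv]
    -- shift identity
    have shift : ∑ j ∈ Finset.range (n + 1), c j * p (j - 1) t
        = ∑ j ∈ Finset.range (n + 1), c (j + 1) * p j t := by
      rw [Finset.sum_range_succ' (fun j => c j * p (j - 1) t) n,
        Finset.sum_range_succ (fun j => c (j + 1) * p j t) n]
      have hcn : c (n + 1) = 0 := rconv_eq_zero r (by omega)
      simp [hc0, hcn]
    have rhs1 : -lam * q n t = -lam * ∑ j ∈ Finset.range (n + 1), c j * p j t := by
      rw [hQ n t]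
    rw [rhs1, ← shift]
    rw [Finset.mul_sum, Finset.mul_sum, ← Finset.sum_add_distrib]
    apply Finset.sum_congr rfl
    intro j _
    ring

end
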